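/- Let n = 2M, let A be an invertible real n×n matrix, λ ∈ ℝᴹ, and L = A⁻¹(⊕ᵢ λᵢ J)A. Let Ψ : ℝⁿ → ℝᵐ satisfy Ψ(exp(tL)·x) = Ψ(x) for all t ∈ ℝ and all x ∈ ℝⁿ. Then there exists φ : ℝⁿ → ℝᵐ such that for every x ∈ ℝⁿ with (Ax)₁ ≠ 0 and every t₀ ∈ ℝ satisfying R(t₀λ₁)e₁ = (Ax)₁/‖(Ax)₁‖₂, Ψ(x) = φ(invRep_e(x; t₀)). -/

import Mathlib

open Matrix NormedSpace

noncomputable section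

/-- `R(t)`: the 2×2 rotation matrix. -/
def R2 (t : ℝ) : Matrix (Fin 2) (Fin 2) ℝ :=
  !![Real.cos t, -Real.sin t; Real.sin t, Real.cos t]

/-- `H(t)`: the 2×2 hyperbolic rotation with rows (cosh t, sinh t), (sinh t, cosh t). -/
def Hyp (t : ℝ) : Matrix (Fin 2) (Fin 2) ℝ :=
  !![Real.cosh t, Real.sinh t; Real.sinh t, Real.cosh t]

/-- `G(t)`: the 2×2 shear with rows (1, t), (0, 1). -/
def Gm (t : ℝ) : Matrix (Fin 2) (Fin 2) ℝ := !![1, t; 0, 1]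

/-- `J`: rows (0, -1), (1, 0). -/
def Jmat : Matrix (Fin 2) (Fin 2) ℝ := !![0, -1; 1, 0]

/-- `K`: rows (0, 1), (1, 0). -/
def Kmat : Matrix (Fin 2) (Fin 2) ℝ := !![0, 1; 1, 0]

/-- `N`: rows (0, 1), (0, 0). -/
def Nmat : Matrix (Fin 2) (Fin 2) ℝ := !![0, 1; 0, 0]

/-- Index type for `ℝⁿ` with `n = 2M`: component `2(i-1)+p` of block `i` is indexed `(p, i)`. -/
abbrev Idx (M : ℕ) := Fin 2 × Fin M

/-- The block-diagonal matrix `⊕ᵢ Cᵢ`. -/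
def bdiag {M : ℕ} (C : Fin M → Matrix (Fin 2) (Fin 2) ℝ) : Matrix (Idx M) (Idx M) ℝ :=
  Matrix.blockDiagonal C

/-- The `i`-th 2-dimensional block `vᵢ` of a vector `v ∈ ℝⁿ`. -/
def blk {M : ℕ} (v : Idx M → ℝ) (i : Fin M) : Fin 2 → ℝ := fun p => v (p, i)

/-- Concatenation `u₁ ⊕ ⋯ ⊕ u_M` of 2-dimensional blocks. -/
def cat {M : ℕ} (u : Fin M → (Fin 2 → ℝ)) : Idx M → ℝ := fun pi => u pi.2 pi.1

/-- `e₁ = (1, 0) ∈ ℝ²`. -/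
def e1 : Fin 2 → ℝ := ![1, 0]

/-- `e₂ = (0, 1) ∈ ℝ²`. -/
def e2 : Fin 2 → ℝ := ![0, 1]

/-- The Euclidean norm `‖u‖₂` of `u ∈ ℝ²`. -/
def norm2 (u : Fin 2 → ℝ) : ℝ := Real.sqrt (u 0 ^ 2 + u 1 ^ 2)

/-- The inverse hyperbolic tangent. -/
def artanh (x : ℝ) : ℝ := Real.log ((1 + x) / (1 - x)) / 2

/-- `t₀` is valid for `x` (elliptic case): `R(t₀λ₁)e₁ = v₁/‖v₁‖₂` where `v = Ax`. -/
def validE {M : ℕ} [NeZero M] (A : Matrix (Idx M) (Idx M) ℝ) (lam : Fin M → ℝ)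
    (x : Idx M → ℝ) (t₀ : ℝ) : Prop :=
  (R2 (t₀ * lam 0)).mulVec e1 = (norm2 (blk (A.mulVec x) 0))⁻¹ • blk (A.mulVec x) 0

/-- `invRep_e(x; t₀) = ‖v₁‖₂ e₁ ⊕ R(−t₀λ₂)v₂ ⊕ ⋯ ⊕ R(−t₀λ_M)v_M`, where `v = Ax`. -/
def invRepE {M : ℕ} [NeZero M] (A : Matrix (Idx M) (Idx M) ℝ) (lam : Fin M → ℝ)
    (x : Idx M → ℝ) (t₀ : ℝ) : Idx M → ℝ :=
  cat (fun i =>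
    if i = 0 then norm2 (blk (A.mulVec x) 0) • e1
    else (R2 (-(t₀ * lam i))).mulVec (blk (A.mulVec x) i))

/-- The hyperbolic parameter `t₀ = artanh(v_{1,2}/v_{1,1})/λ₁`, where `v = Ax`. -/
def t0H {M : ℕ} [NeZero M] (A : Matrix (Idx M) (Idx M) ℝ) (lam : Fin M → ℝ)
    (x : Idx M → ℝ) : ℝ :=
  artanh (blk (A.mulVec x) 0 1 / blk (A.mulVec x) 0 0) / lam 0

/-- `invRep_h(x) = sgn(v_{1,1})√(v_{1,1}² − v_{1,2}²) e₁ ⊕ H(−t₀λ₂)v₂ ⊕ ⋯`, `v = Ax`. -/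
def invRepH {M : ℕ} [NeZero M] (A : Matrix (Idx M) (Idx M) ℝ) (lam : Fin M → ℝ)
    (x : Idx M → ℝ) : Idx M → ℝ :=
  cat (fun i =>
    if i = 0 then
      (Real.sign (blk (A.mulVec x) 0 0) *
        Real.sqrt (blk (A.mulVec x) 0 0 ^ 2 - blk (A.mulVec x) 0 1 ^ 2)) • e1
    else (Hyp (-(t0H A lam x * lam i))).mulVec (blk (A.mulVec x) i))

/-- The parabolic parameter `t₀ = v_{1,1}/(λ₁ v_{1,2})`, where `v = Ax`. -/
def t0P {M : ℕ} [NeZero M] (A : Matrix (Idx M) (Idx M) ℝ) (lam : Fin M → ℝ)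
    (x : Idx M → ℝ) : ℝ :=
  blk (A.mulVec x) 0 0 / (lam 0 * blk (A.mulVec x) 0 1)

/-- `invRep_p(x) = v_{1,2} e₂ ⊕ G(−t₀λ₂)v₂ ⊕ ⋯ ⊕ G(−t₀λ_M)v_M`, where `v = Ax`. -/
def invRepP {M : ℕ} [NeZero M] (A : Matrix (Idx M) (Idx M) ℝ) (lam : Fin M → ℝ)
    (x : Idx M → ℝ) : Idx M → ℝ :=
  cat (fun i =>
    if i = 0 then blk (A.mulVec x) 0 1 • e2
    else (Gm (-(t0P A lam x * lam i))).mulVec (blk (A.mulVec x) i))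

/-- Complex numbers as 2×2 matrices. -/
def cMat : ℂ →+* Matrix (Fin 2) (Fin 2) ℝ where
  toFun z := !![z.re, -z.im; z.im, z.re]
  map_one' := by simp [Matrix.one_fin_two]
  map_mul' z w := by
    ext i j
    fin_cases i <;> fin_cases j <;>
      simp [Matrix.mul_apply, Fin.sum_univ_two] <;> ring
  map_zero' := by ext i j; fin_cases i <;> fin_cases j <;> simp
  map_add' z w := by
    ext i j
    fin_cases i <;> fin_cases j <;> simp <;> ring

lemma cMat_cont : Continuous cMat := by
  apply continuous_matrix
  intro i j
  fin_cases i <;> fin_cases j <;> simp [cMat] <;> fun_prop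

lemma expJ (s : ℝ) : exp (s • Jmat) = R2 s := by
  letI : SeminormedRing (Matrix (Fin 2) (Fin 2) ℝ) := Matrix.linftyOpSemiNormedRing
  letI : NormedRing (Matrix (Fin 2) (Fin 2) ℝ) := Matrix.linftyOpNormedRing
  letI : NormedAlgebra ℝ (Matrix (Fin 2) (Fin 2) ℝ) := Matrix.linftyOpNormedAlgebra
  have h1 : s • Jmat = cMat (s * Complex.I) := by
    ext i j; fin_cases i <;> fin_cases j <;> simp [cMat, Jmat]
  rw [h1]
  erw [← map_exp cMat cMat_cont]
  rw [
    ← Complex.exp_eq_exp_ℂ, Complex.exp_mul_I]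
  ext i j; fin_cases i <;> fin_cases j <;>
    simp [cMat, R2, Complex.cos_ofReal_re, Complex.sin_ofReal_re]

lemma R2_neg_mul (s : ℝ) : R2 (-s) * R2 s = 1 := by
  ext i j
  fin_cases i <;> fin_cases j <;>
    simp [R2, Matrix.mul_apply, Fin.sum_univ_two, Matrix.one_apply] <;>
    nlinarith [Real.sin_sq_add_cos_sq s]

lemma bdiag_mulVec {M : ℕ} (C : Fin M → Matrix (Fin 2) (Fin 2) ℝ) (v : Idx M → ℝ) :
    (bdiag C).mulVec v = cat (fun i => (C i).mulVec (blk v i)) := by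
  ext ⟨p, i⟩
  simp [bdiag, cat, blk, Matrix.mulVec, dotProduct, Fintype.sum_prod_type,
    Matrix.blockDiagonal_apply, Finset.sum_comm, mul_ite, ite_mul, Finset.sum_ite_eq,
    Finset.sum_ite_eq']

lemma norm2_ne_zero {u : Fin 2 → ℝ} (hu : u ≠ 0) : norm2 u ≠ 0 := by
  have h : u 0 ^ 2 + u 1 ^ 2 > 0 := by
    have : u 0 ≠ 0 ∨ u 1 ≠ 0 := by
      by_contra hc
      push_neg at hc
      exact hu (funext fun i => by fin_cases i <;> simp [hc.1, hc.2])
    rcases this with h | h <;> positivity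
  simp only [norm2]
  positivity

/-- **Elliptic invariant functions, invertible `A`.** If `Ψ(exp(tL)x) = Ψ(x)`
for all `t, x`, with `L = A⁻¹(⊕ᵢ λᵢJ)A`, then there is `φ` with `Ψ(x) = φ(invRep_e(x; t₀))`
for every `x` with `(Ax)₁ ≠ 0` and every `t₀` with `R(t₀λ₁)e₁ = (Ax)₁/‖(Ax)₁‖₂`. -/
theorem stmt17 (M : ℕ) [NeZero M] (m : ℕ)
    (A : Matrix (Idx M) (Idx M) ℝ) (hA : IsUnit A)
    (lam : Fin M → ℝ) (L : Matrix (Idx M) (Idx M) ℝ)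
    (hL : L = A⁻¹ * bdiag (fun i => lam i • Jmat) * A)
    (Ψ : (Idx M → ℝ) → (Fin m → ℝ))
    (hΨ : ∀ (t : ℝ) (x : Idx M → ℝ), Ψ ((exp (t • L)).mulVec x) = Ψ x) :
    ∃ φ : (Idx M → ℝ) → (Fin m → ℝ),
      ∀ x : Idx M → ℝ, blk (A.mulVec x) 0 ≠ 0 →
        ∀ t₀ : ℝ, validE A lam x t₀ → Ψ x = φ (invRepE A lam x t₀) := by
  obtain ⟨u, hu⟩ := hA
  have hAinv : A⁻¹ = (↑u⁻¹ : Matrix (Idx M) (Idx M) ℝ) := by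
    rw [← hu, Matrix.coe_units_inv]
  have hexp : ∀ t : ℝ, exp (t • L) =
      A⁻¹ * bdiag (fun i => R2 (t * lam i)) * A := by
    intro t
    have h1 : t • L = (↑u⁻¹ : Matrix (Idx M) (Idx M) ℝ) *
        (t • bdiag (fun i => lam i • Jmat)) * (↑u : Matrix (Idx M) (Idx M) ℝ) := by
      rw [hL, hAinv, ← hu]
      noncomm_ring
    rw [h1, Matrix.exp_units_conj' u, hAinv, hu]
    congr 2
    rw [bdiag, ← Matrix.blockDiagonal_smul, Matrix.exp_blockDiagonal]
    refine congrArg Matrix.blockDiagonal (funext fun i => ?_)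
    letI : SeminormedRing (Matrix (Fin 2) (Fin 2) ℝ) := Matrix.linftyOpSemiNormedRing
    letI : NormedRing (Matrix (Fin 2) (Fin 2) ℝ) := Matrix.linftyOpNormedRing
    letI : NormedAlgebra ℝ (Matrix (Fin 2) (Fin 2) ℝ) := Matrix.linftyOpNormedAlgebra
    letI : NormedAlgebra ℚ (Matrix (Fin 2) (Fin 2) ℝ) := Matrix.linftyOpNormedAlgebra
    have hsm : (t • fun i => lam i • Jmat) i = (t * lam i) • Jmat := by
      simp [smul_smul]
    erw [Pi.coe_exp, hsm]
    exact expJ (t * lam i)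
  refine ⟨fun y => Ψ (A⁻¹.mulVec y), fun x hx t₀ hval => ?_⟩
  set v := A.mulVec x with hv
  have hnz : norm2 (blk v 0) ≠ 0 := norm2_ne_zero hx
  have h2 := congrArg ((R2 (-(t₀ * lam 0))).mulVec) hval
  rw [Matrix.mulVec_mulVec, R2_neg_mul, Matrix.one_mulVec, Matrix.mulVec_smul] at h2
  have hblk0 : (R2 (-(t₀ * lam 0))).mulVec (blk v 0) = norm2 (blk v 0) • e1 := by
    rw [h2, smul_smul, mul_inv_cancel₀ hnz, one_smul]
  have hrep : invRepE A lam x t₀ =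
      (bdiag (fun i => R2 (-t₀ * lam i))).mulVec v := by
    rw [bdiag_mulVec]
    funext ⟨p, i⟩
    by_cases hi : i = 0
    · subst hi
      have hneg : -t₀ * lam (0 : Fin M) = -(t₀ * lam 0) := by ring
      simp [invRepE, cat, ← hv, hneg, hblk0]
    · have hneg : -t₀ * lam i = -(t₀ * lam i) := by ring
      simp [invRepE, cat, ← hv, hi, hneg]
  have hfin : A⁻¹.mulVec ((bdiag (fun i => R2 (-t₀ * lam i))).mulVec v) =
      (exp ((-t₀) • L)).mulVec x := by
    rw [hexp (-t₀), hv]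
    simp only [Matrix.mulVec_mulVec, Matrix.mul_assoc]
  show Ψ x = Ψ (A⁻¹.mulVec (invRepE A lam x t₀))
  rw [hrep, hfin, hΨ]
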